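/- The function t ↦ t·((1/2)·erfc(t) − 𝟙_{t ≤ 0}) is integrable on ℝ and ∫_ℝ t·((1/2)·erfc(t) − 𝟙_{t ≤ 0}) dt = 1/4, where 𝟙_{t ≤ 0} denotes the indicator function of the set {t ∈ ℝ : t ≤ 0}. -/

import Mathlib

open MeasureTheory Real

/-- The complementary error function `erfc t = (2/√π) ∫_t^∞ e^{-u²} du`. -/
noncomputable def erfc (t : ℝ) : ℝ := (2 / Real.sqrt Real.pi) * ∫ u in Set.Ioi t, Real.exp (-u ^ 2)

section aux
open Set Filter

private lemma hIntExp : Integrable (fun u : ℝ => Real.exp (-u ^ 2)) := by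
  have := integrable_exp_neg_mul_sq (b := (1 : ℝ)) one_pos
  simpa using this

private lemma gauss_total : (∫ u : ℝ, Real.exp (-u ^ 2)) = Real.sqrt Real.pi := by
  have := integral_gaussian (1 : ℝ)
  simpa using this

private lemma gauss_Ioi0 : (∫ u in Ioi (0 : ℝ), Real.exp (-u ^ 2)) = Real.sqrt Real.pi / 2 := by
  have := integral_gaussian_Ioi (1 : ℝ)
  simpa using this

private lemma sqrt_pi_ne : Real.sqrt Real.pi ≠ 0 := (Real.sqrt_pos.2 Real.pi_pos).ne'

private lemma erfc_zero : erfc 0 = 1 := by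
  unfold erfc
  rw [gauss_Ioi0]
  field_simp

private lemma gauss_Iic (t : ℝ) :
    (∫ u in Iic t, Real.exp (-u ^ 2)) + (∫ u in Ioi t, Real.exp (-u ^ 2))
      = Real.sqrt Real.pi := by
  rw [intervalIntegral.integral_Iic_add_Ioi hIntExp.integrableOn hIntExp.integrableOn, gauss_total]

private lemma erfc_eq (t : ℝ) :
    erfc t = 1 - (2 / Real.sqrt Real.pi) * ∫ u in (0 : ℝ)..t, Real.exp (-u ^ 2) := by
  have h1 := gauss_Iic t
  have h0 := gauss_Iic 0
  have h2 : (∫ u in Iic t, Real.exp (-u ^ 2)) - (∫ u in Iic (0 : ℝ), Real.exp (-u ^ 2))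
      = ∫ u in (0 : ℝ)..t, Real.exp (-u ^ 2) :=
    intervalIntegral.integral_Iic_sub_Iic hIntExp.integrableOn hIntExp.integrableOn
  rw [gauss_Ioi0] at h0
  have key : (∫ u in Ioi t, Real.exp (-u ^ 2))
      = Real.sqrt Real.pi / 2 - ∫ u in (0 : ℝ)..t, Real.exp (-u ^ 2) := by linarith
  unfold erfc
  rw [key]
  have h := sqrt_pi_ne
  field_simp

private lemma hasDerivAt_erfc (t : ℝ) :
    HasDerivAt erfc (-(2 / Real.sqrt Real.pi) * Real.exp (-t ^ 2)) t := by
  have hcont : Continuous fun u : ℝ => Real.exp (-u ^ 2) := by continuity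
  have hd : HasDerivAt (fun x => ∫ u in (0 : ℝ)..x, Real.exp (-u ^ 2)) (Real.exp (-t ^ 2)) t :=
    intervalIntegral.integral_hasDerivAt_right hIntExp.intervalIntegrable
      (hcont.stronglyMeasurableAtFilter _ _) hcont.continuousAt
  have : HasDerivAt (fun x => 1 - (2 / Real.sqrt Real.pi) * ∫ u in (0 : ℝ)..x,
      Real.exp (-u ^ 2)) (-(2 / Real.sqrt Real.pi) * Real.exp (-t ^ 2)) t := by
    have := (hd.const_mul (2 / Real.sqrt Real.pi)).const_sub 1
    exact this.congr_deriv (by ring)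
  exact this.congr_of_eventuallyEq (Filter.Eventually.of_forall fun x => erfc_eq x)

private lemma erfc_nonneg (t : ℝ) : 0 ≤ erfc t := by
  unfold erfc
  apply mul_nonneg (by positivity)
  exact setIntegral_nonneg measurableSet_Ioi fun u _ => (Real.exp_pos _).le

private lemma gauss_Ioi_shift (t : ℝ) :
    (∫ u in Ioi t, Real.exp (-(u - t) ^ 2)) = Real.sqrt Real.pi / 2 := by
  have A : MeasurableEmbedding fun x : ℝ => x + t :=
    (Homeomorph.addRight t).measurableEmbedding
  have hmap := A.setIntegral_map (μ := volume)
    (fun u : ℝ => Real.exp (-(u - t) ^ 2)) (Ioi t)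
  rw [map_add_right_eq_self volume t] at hmap
  rw [hmap]
  have hpre : (fun x : ℝ => x + t) ⁻¹' Ioi t = Ioi 0 := by
    rw [preimage_add_const_Ioi, sub_self]
  rw [hpre]
  simp only [add_sub_cancel_right]
  exact gauss_Ioi0

private lemma erfc_le {t : ℝ} (ht : 0 ≤ t) : erfc t ≤ Real.exp (-t ^ 2) := by
  have hb : ∀ u ∈ Ioi t, Real.exp (-u ^ 2)
      ≤ Real.exp (-t ^ 2) * Real.exp (-(u - t) ^ 2) := by
    intro u hu
    rw [← Real.exp_add]
    apply Real.exp_le_exp.2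
    have : t ≤ u := (le_of_lt hu)
    nlinarith
  have hint2 : IntegrableOn (fun u : ℝ => Real.exp (-t ^ 2) * Real.exp (-(u - t) ^ 2))
      (Ioi t) := ((hIntExp.comp_sub_right t).const_mul _).integrableOn
  have hmono : (∫ u in Ioi t, Real.exp (-u ^ 2))
      ≤ ∫ u in Ioi t, Real.exp (-t ^ 2) * Real.exp (-(u - t) ^ 2) :=
    setIntegral_mono_on hIntExp.integrableOn hint2 measurableSet_Ioi hb
  rw [integral_const_mul, gauss_Ioi_shift] at hmono
  unfold erfc
  calc (2 / Real.sqrt Real.pi) * ∫ u in Ioi t, Real.exp (-u ^ 2)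
      ≤ (2 / Real.sqrt Real.pi) * (Real.exp (-t ^ 2) * (Real.sqrt Real.pi / 2)) := by
        apply mul_le_mul_of_nonneg_left hmono (by positivity)
    _ = Real.exp (-t ^ 2) := by field_simp

private lemma erfc_add_neg (t : ℝ) : erfc t + erfc (-t) = 2 := by
  have h1 : (∫ u in Ioi (-t), Real.exp (-u ^ 2)) = ∫ u in Iic t, Real.exp (-u ^ 2) := by
    rw [← neg_neg t, ← integral_comp_neg_Iic]
    simp
  unfold erfc
  rw [h1]
  have h2 := gauss_Iic t
  have h := sqrt_pi_ne
  field_simp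
  linarith

/-- Antiderivative of `x * erfc x`. -/
private noncomputable def F (x : ℝ) : ℝ :=
  (x ^ 2 / 2 - 1 / 4) * erfc x - x * Real.exp (-x ^ 2) / (2 * Real.sqrt Real.pi)

private lemma hasDerivAt_F (x : ℝ) : HasDerivAt F (x * erfc x) x := by
  have h1 : HasDerivAt (fun x : ℝ => x ^ 2 / 2 - 1 / 4) x x := by
    have := ((hasDerivAt_pow 2 x).div_const 2).sub_const (1 / 4)
    exact this.congr_deriv (by norm_num)
  have h2 : HasDerivAt (fun x : ℝ => Real.exp (-x ^ 2))
      (Real.exp (-x ^ 2) * (-(2 * x))) x := by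
    have := ((hasDerivAt_pow 2 x).neg).exp
    exact this.congr_deriv (by norm_num)
  have h3 : HasDerivAt (fun x : ℝ => x * Real.exp (-x ^ 2) / (2 * Real.sqrt Real.pi))
      ((1 * Real.exp (-x ^ 2) + x * (Real.exp (-x ^ 2) * (-(2 * x))))
        / (2 * Real.sqrt Real.pi)) x :=
    ((hasDerivAt_id x).mul h2).div_const _
  have h4 := (h1.mul (hasDerivAt_erfc x)).sub h3
  have h := sqrt_pi_ne
  exact h4.congr_deriv (by field_simp; ring)

private lemma sq_mul_exp_tendsto :
    Tendsto (fun x : ℝ => x ^ 2 * Real.exp (-x ^ 2)) atTop (nhds 0) := by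
  have h1 := tendsto_pow_mul_exp_neg_atTop_nhds_zero 1
  have h2 : Tendsto (fun x : ℝ => x ^ 2) atTop atTop :=
    tendsto_pow_atTop (by norm_num)
  have := h1.comp h2
  simpa [Function.comp_def] using this

private lemma tendsto_F : Tendsto F atTop (nhds (0 : ℝ)) := by
  have hbd : ∀ᶠ x : ℝ in atTop, ‖F x‖ ≤ 2 * (x ^ 2 * Real.exp (-x ^ 2)) := by
    filter_upwards [eventually_ge_atTop (1 : ℝ)] with x hx
    have hx0 : (0 : ℝ) ≤ x := by linarith
    have he := erfc_le hx0
    have hen := erfc_nonneg x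
    have hexp : (0 : ℝ) < Real.exp (-x ^ 2) := Real.exp_pos _
    have hsp : (1 : ℝ) ≤ Real.sqrt Real.pi := by
      rw [show (1 : ℝ) = Real.sqrt 1 by simp]
      exact Real.sqrt_le_sqrt (by linarith [Real.pi_gt_three])
    have hq : (0:ℝ) ≤ x ^ 2 / 2 - 1 / 4 := by nlinarith
    have ha1 : 0 ≤ (x ^ 2 / 2 - 1 / 4) * erfc x := mul_nonneg hq hen
    have ha2 : (x ^ 2 / 2 - 1 / 4) * erfc x ≤ x ^ 2 * Real.exp (-x ^ 2) := by nlinarith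
    have hb1 : 0 ≤ x * Real.exp (-x ^ 2) / (2 * Real.sqrt Real.pi) := by positivity
    have hb2 : x * Real.exp (-x ^ 2) / (2 * Real.sqrt Real.pi)
        ≤ x ^ 2 * Real.exp (-x ^ 2) := by
      rw [div_le_iff₀ (by positivity)]
      have h1 : x * Real.exp (-x ^ 2) ≤ x ^ 2 * Real.exp (-x ^ 2) := by nlinarith
      have h2 : x ^ 2 * Real.exp (-x ^ 2) ≤ x ^ 2 * Real.exp (-x ^ 2) * (2 * Real.sqrt Real.pi) := by nlinarith
      linarith
    rw [Real.norm_eq_abs, abs_le]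
    unfold F
    constructor <;> nlinarith
  have hg : Tendsto (fun x : ℝ => 2 * (x ^ 2 * Real.exp (-x ^ 2))) atTop (nhds 0) := by
    have := sq_mul_exp_tendsto.const_mul (2 : ℝ)
    simpa using this
  exact squeeze_zero_norm' hbd hg

private lemma deriv_nonneg : ∀ x ∈ Ioi (0 : ℝ), 0 ≤ x * erfc x :=
  fun x hx => mul_nonneg (le_of_lt hx) (erfc_nonneg x)

private lemma F_continuousWithinAt : ContinuousWithinAt F (Ici 0) 0 :=
  (hasDerivAt_F 0).continuousAt.continuousWithinAt

private lemma key_integrable : IntegrableOn (fun x : ℝ => x * erfc x) (Ioi 0) :=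
  integrableOn_Ioi_deriv_of_nonneg F_continuousWithinAt
    (fun x _ => hasDerivAt_F x) deriv_nonneg tendsto_F

private lemma key_integral : (∫ x in Ioi (0 : ℝ), x * erfc x) = 1 / 4 := by
  have h := integral_Ioi_of_hasDerivAt_of_nonneg F_continuousWithinAt
    (fun x _ => hasDerivAt_F x) deriv_nonneg tendsto_F
  rw [h]
  unfold F
  rw [erfc_zero]
  norm_num

private lemma pointwise_eq (t : ℝ) :
    t * ((1 / 2) * erfc t - Set.indicator (Set.Iic (0 : ℝ)) (fun _ => (1 : ℝ)) t)
      = |t| * ((1 / 2) * erfc |t|) := by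
  by_cases ht : t ≤ 0
  · rw [Set.indicator_of_mem (by exact ht : t ∈ Set.Iic (0 : ℝ)), abs_of_nonpos ht]
    have := erfc_add_neg t
    nlinarith [this]
  · rw [Set.indicator_of_notMem (by exact ht : t ∉ Set.Iic (0 : ℝ)),
      abs_of_pos (lt_of_not_ge ht)]
    ring

private lemma half_integrable : IntegrableOn (fun x : ℝ => x * ((1 / 2) * erfc x)) (Ioi 0) := by
  have : IntegrableOn (fun x : ℝ => (1 / 2) * (x * erfc x)) (Ioi 0) :=
    key_integrable.const_mul _
  exact this.congr_fun (fun x _ => by ring) measurableSet_Ioi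

private lemma abs_integrable :
    Integrable (fun t : ℝ => |t| * ((1 / 2) * erfc |t|)) := by
  set h : ℝ → ℝ := fun x => x * ((1 / 2) * erfc x) with hh
  have hIoi : IntegrableOn (fun t : ℝ => |t| * ((1 / 2) * erfc |t|)) (Ioi 0) := by
    refine half_integrable.congr_fun (fun x hx => ?_) measurableSet_Ioi
    rw [abs_of_pos hx]
  have hIic : IntegrableOn (fun t : ℝ => |t| * ((1 / 2) * erfc |t|)) (Iic 0) := by
    rw [← Measure.map_neg_eq_self (volume : Measure ℝ)]
    have m : MeasurableEmbedding fun x : ℝ => -x :=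
      (Homeomorph.neg ℝ).measurableEmbedding
    rw [m.integrableOn_map_iff]
    simp_rw [Function.comp_def, abs_neg, neg_preimage, neg_Iic, neg_zero]
    exact (integrableOn_Ici_iff_integrableOn_Ioi).mpr hIoi
  have := hIic.union hIoi
  rwa [Iic_union_Ioi, integrableOn_univ] at this

end aux

/-- `t ↦ t·((1/2)·erfc t − 𝟙_{t ≤ 0})` is integrable on `ℝ` with total integral `1/4`. -/
theorem erfc_minus_indicator_first_moment :
    Integrable (fun t : ℝ =>
      t * ((1 / 2) * erfc t - Set.indicator (Set.Iic (0 : ℝ)) (fun _ => (1 : ℝ)) t)) ∧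
    (∫ t : ℝ, t * ((1 / 2) * erfc t - Set.indicator (Set.Iic (0 : ℝ)) (fun _ => (1 : ℝ)) t))
      = 1 / 4 := by
  have hfun : (fun t : ℝ =>
      t * ((1 / 2) * erfc t - Set.indicator (Set.Iic (0 : ℝ)) (fun _ => (1 : ℝ)) t))
      = fun t : ℝ => |t| * ((1 / 2) * erfc |t|) := funext pointwise_eq
  constructor
  · rw [hfun]; exact abs_integrable
  · rw [hfun]
    have : (∫ t : ℝ, |t| * ((1 / 2) * erfc |t|))
        = 2 * ∫ x in Set.Ioi (0 : ℝ), x * ((1 / 2) * erfc x) :=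
      integral_comp_abs (f := fun x => x * ((1 / 2) * erfc x))
    rw [this]
    have h2 : (∫ x in Set.Ioi (0 : ℝ), x * ((1 / 2) * erfc x))
        = (1 / 2) * ∫ x in Set.Ioi (0 : ℝ), x * erfc x := by
      rw [← integral_const_mul]
      exact setIntegral_congr_fun measurableSet_Ioi fun x _ => by ring
    rw [h2, key_integral]
    norm_num
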